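/- Let n ≥ 1 and let V : ℝⁿ → ℝ be continuous and ℤⁿ-periodic with max_{ℝⁿ} V = 0, and suppose that the set of maximizers per period, {x ∈ [0,1)ⁿ : V(x) = 0}, is finite. Then H̄(p) ≥ 0 for every p ∈ ℝⁿ, and there exists r > 0 such that H̄(p) = 0 whenever |p| ≤ r; that is, 0 is an interior point of the minimal level set F₀ = {p ∈ ℝⁿ : H̄(p) = 0}. -/

import Mathlib

noncomputable section

open MeasureTheory Filter Topology Real
open scoped RealInnerProductSpace

/-- The point of `EuclideanSpace ℝ (Fin n)` with integer coordinates `k`. -/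
def ivN (n : ℕ) (k : Fin n → ℤ) : EuclideanSpace ℝ (Fin n) := WithLp.toLp 2 (fun i => (k i : ℝ))

/-- `ℤⁿ`-periodicity of a function on `ℝⁿ`. -/
def ZPerN (n : ℕ) (f : EuclideanSpace ℝ (Fin n) → ℝ) : Prop :=
  ∀ (x : EuclideanSpace ℝ (Fin n)) (k : Fin n → ℤ), f (x + ivN n k) = f x

/-- The effective Hamiltonian via the inf–max formula. -/
def effHN (n : ℕ) (V : EuclideanSpace ℝ (Fin n) → ℝ) (p : EuclideanSpace ℝ (Fin n)) : ℝ :=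
  sInf {A : ℝ | ∃ φ : EuclideanSpace ℝ (Fin n) → ℝ, ContDiff ℝ 1 φ ∧ ZPerN n φ ∧
    A = ⨆ x : EuclideanSpace ℝ (Fin n), ((1 / 2) * ‖p + gradient φ x‖ ^ 2 + V x)}

namespace S15

variable {n : ℕ}

local notation "E" => EuclideanSpace ℝ (Fin n)

/-- nearest-lattice-point reduction map -/
def Rm (n : ℕ) (y : EuclideanSpace ℝ (Fin n)) : EuclideanSpace ℝ (Fin n) :=
  WithLp.toLp 2 (fun i => y i - round (y i))

lemma Rm_apply (y : E) (i : Fin n) : Rm n y i = y i - round (y i) := rfl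

lemma Rm_eq (y : E) : Rm n y = y - ivN n (fun i => round (y i)) := by
  ext i
  simp [Rm, ivN, PiLp.sub_apply]

lemma ivN_add (k k' : Fin n → ℤ) : ivN n (k + k') = ivN n k + ivN n k' := by
  ext i; simp [ivN, PiLp.add_apply]

lemma ivN_sub (k k' : Fin n → ℤ) : ivN n (k - k') = ivN n k - ivN n k' := by
  ext i; simp [ivN, PiLp.sub_apply]

lemma Rm_shift (y : E) (k : Fin n → ℤ) : Rm n (y + ivN n k) = Rm n y := by
  ext i
  simp only [Rm, PiLp.add_apply, ivN]
  rw [round_add_intCast]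
  push_cast; ring

lemma Rm_shift_sub (y : E) (k : Fin n → ℤ) : Rm n (y - ivN n k) = Rm n y := by
  have h := Rm_shift (y - ivN n k) k
  rw [sub_add_cancel] at h
  exact h.symm

lemma Rm_ivN (k : Fin n → ℤ) : Rm n (ivN n k) = 0 := by
  ext i
  simp [Rm, ivN, round_intCast]

lemma apply_abs_le_norm (z : E) (i : Fin n) : |z i| ≤ ‖z‖ := by
  rw [EuclideanSpace.norm_eq]
  calc |z i| = √((z i) ^ 2) := (Real.sqrt_sq_eq_abs _).symm
  _ ≤ √(∑ j, ‖z j‖ ^ 2) := by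
      apply Real.sqrt_le_sqrt
      have := Finset.single_le_sum (f := fun j => ‖z j‖ ^ 2)
        (fun j _ => by positivity) (Finset.mem_univ i)
      simpa [Real.norm_eq_abs, sq_abs] using this

lemma round_nearest (t : ℝ) (m : ℤ) : |t - round t| ≤ |t - m| := by
  rcases eq_or_ne (round t) m with h | h
  · rw [h]
  · have h1 : (1 : ℝ) ≤ |(round t : ℝ) - (m : ℝ)| := by
      have : round t - m ≠ 0 := sub_ne_zero.mpr h
      have := Int.one_le_abs this
      exact_mod_cast this
    have h2 := abs_sub_round t
    have h3 : |(round t : ℝ) - m| ≤ |(round t : ℝ) - t| + |t - m| := abs_sub_le _ _ _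
    have h4 : |(round t : ℝ) - t| = |t - round t| := abs_sub_comm _ _
    linarith

lemma norm_Rm_le (y : E) (k : Fin n → ℤ) : ‖Rm n y‖ ≤ ‖y - ivN n k‖ := by
  rw [EuclideanSpace.norm_eq, EuclideanSpace.norm_eq]
  apply Real.sqrt_le_sqrt
  apply Finset.sum_le_sum
  intro i _
  have h1 : ‖Rm n y i‖ = |y i - round (y i)| := by rw [Rm_apply, Real.norm_eq_abs]
  have h2 : ‖(y - ivN n k) i‖ = |y i - k i| := by
    rw [PiLp.sub_apply, Real.norm_eq_abs]; rfl
  rw [h1, h2]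
  exact pow_le_pow_left₀ (abs_nonneg _) (round_nearest _ _) 2

lemma infDist_lat (y : E) : Metric.infDist y (Set.range (ivN n)) = ‖Rm n y‖ := by
  apply le_antisymm
  · have hm : ivN n (fun i => round (y i)) ∈ Set.range (ivN n) := ⟨_, rfl⟩
    have := Metric.infDist_le_dist_of_mem (x := y) hm
    rwa [dist_eq_norm, ← Rm_eq] at this
  · rw [Metric.infDist_eq_iInf]
    have : Nonempty (Set.range (ivN n)) := ⟨ivN n 0, 0, rfl⟩
    apply le_ciInf
    rintro ⟨z, k, rfl⟩
    rw [dist_eq_norm]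
    exact norm_Rm_le y k

lemma round_eventually_const {t : ℝ} (h : ∀ m : ℤ, t + 1/2 ≠ (m : ℝ)) :
    ∀ᶠ u in 𝓝 t, round u = round t := by
  set m := ⌊t + 1/2⌋ with hm
  have h1 : (m : ℝ) < t + 1/2 := lt_of_le_of_ne (Int.floor_le _) (fun he => h m he.symm)
  have h2 : t + 1/2 < (m : ℝ) + 1 := Int.lt_floor_add_one _
  have hmem : t ∈ Set.Ioo ((m : ℝ) - 1/2) ((m : ℝ) + 1/2) := ⟨by linarith, by linarith⟩
  have hev : ∀ᶠ u in 𝓝 t, u ∈ Set.Ioo ((m : ℝ) - 1/2) ((m : ℝ) + 1/2) :=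
    Ioo_mem_nhds hmem.1 hmem.2
  have hround : ∀ u ∈ Set.Ioo ((m : ℝ) - 1/2) ((m : ℝ) + 1/2), round u = m := by
    intro u hu
    rw [round_eq]
    exact Int.floor_eq_iff.mpr ⟨by linarith [hu.1], by linarith [hu.2]⟩
  filter_upwards [hev] with u hu
  rw [hround u hu, hround t hmem]

lemma half_int_far {t : ℝ} {m₀ : ℤ} (h : t + 1/2 = (m₀ : ℝ)) (u : ℝ)
    (hu : |u - t| < 1/8) (m : ℤ) : 3/8 ≤ |u - m| := by
  have h1 : (1/2 : ℝ) ≤ |t - m| := by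
    have ht : t - m = ((m₀ - m : ℤ) : ℝ) - 1/2 := by push_cast; linarith
    rw [ht]
    rcases le_or_gt (m₀ - m : ℤ) 0 with hj | hj
    · have : ((m₀ - m : ℤ) : ℝ) ≤ 0 := by exact_mod_cast hj
      rw [abs_of_nonpos (by linarith)]; linarith
    · have : (1 : ℝ) ≤ ((m₀ - m : ℤ) : ℝ) := by exact_mod_cast hj
      rw [abs_of_nonneg (by linarith)]; linarith
  have h3 : |t - m| ≤ |t - u| + |u - m| := abs_sub_le _ _ _
  have h4 : |t - u| = |u - t| := abs_sub_comm _ _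
  linarith

/-- Master local-form lemma. -/
lemma local_form (b : EuclideanSpace ℝ (Fin n) → ℝ) {ρ : ℝ} (hρ8 : ρ ≤ 1/8)
    (hb0 : ∀ z : EuclideanSpace ℝ (Fin n), ρ ≤ ‖z‖ → b z = 0) (s x : E) :
    ∃ g : EuclideanSpace ℝ (Fin n) → ℝ, (fun y => b (Rm n (y - s))) =ᶠ[𝓝 x] g ∧
      ((g = fun _ => 0) ∨ ∃ k : Fin n → ℤ, g = fun y => b (y - s - ivN n k)) := by
  by_cases hhalf : ∃ i : Fin n, ∃ m : ℤ, (x - s) i + 1/2 = (m : ℝ)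
  · refine ⟨fun _ => 0, ?_, Or.inl rfl⟩
    obtain ⟨i, m₀, hm⟩ := hhalf
    have hcont : Continuous fun y : E => (y - s) i := by
      have : Continuous fun y : E => y - s := continuous_id.sub continuous_const
      exact (EuclideanSpace.proj i).continuous.comp this
    have hev : ∀ᶠ y in 𝓝 x, |(y - s) i - (x - s) i| < 1/8 := by
      have : ContinuousAt (fun y : E => (y - s) i) x := hcont.continuousAt
      have := this.tendsto (Metric.ball_mem_nhds _ (by norm_num : (0:ℝ) < 1/8))
      filter_upwards [this] with y hy
      simpa [Real.dist_eq] using hy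
    filter_upwards [hev] with y hy
    apply hb0
    have h3 : 3/8 ≤ |Rm n (y - s) i| := by
      rw [Rm_apply]
      exact half_int_far hm _ hy _
    calc ρ ≤ 1/8 := hρ8
    _ ≤ 3/8 := by norm_num
    _ ≤ |Rm n (y - s) i| := h3
    _ ≤ ‖Rm n (y - s)‖ := apply_abs_le_norm _ i
  · push_neg at hhalf
    refine ⟨fun y => b (y - s - ivN n (fun i => round ((x - s) i))), ?_, Or.inr ⟨_, rfl⟩⟩
    have hev : ∀ᶠ y in 𝓝 x, ∀ i, round ((y - s) i) = round ((x - s) i) := by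
      rw [eventually_all]
      intro i
      have hcont : Continuous fun y : E => (y - s) i := by
        have : Continuous fun y : E => y - s := continuous_id.sub continuous_const
        exact (EuclideanSpace.proj i).continuous.comp this
      exact hcont.continuousAt.eventually (round_eventually_const (hhalf i))
    filter_upwards [hev] with y hy
    rw [Rm_eq]
    congr 2
    congr 1; funext i
    simp only [ivN, hy i]

lemma exists_sep (S' : Finset (EuclideanSpace ℝ (Fin n)))
    (hS : ∀ s ∈ S', ∀ i, s i ∈ Set.Ico (0:ℝ) 1) :
    ∃ ρ₀ : ℝ, 0 < ρ₀ ∧ ρ₀ ≤ 1/8 ∧ ∀ s ∈ S', ∀ s' ∈ S', ∀ k : Fin n → ℤ,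
      s ≠ s' + ivN n k → ρ₀ ≤ ‖s - (s' + ivN n k)‖ := by
  classical
  set Kbox : Finset (Fin n → ℤ) := Finset.Icc (fun _ => (-1:ℤ)) (fun _ => 1) with hKbox
  set T : Finset ℝ := Finset.image
      (fun q : (EuclideanSpace ℝ (Fin n) × EuclideanSpace ℝ (Fin n)) × (Fin n → ℤ) =>
        ‖q.1.1 - (q.1.2 + ivN n q.2)‖)
      (((S' ×ˢ S') ×ˢ Kbox).filter fun q => q.1.1 ≠ q.1.2 + ivN n q.2) with hT
  set m : ℝ := if h : T.Nonempty then T.min' h else 1 with hm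
  have hmpos : 0 < m := by
    rw [hm]
    split_ifs with h
    · have h2 : T.min' h ∈ Finset.image
          (fun q : (EuclideanSpace ℝ (Fin n) × EuclideanSpace ℝ (Fin n)) × (Fin n → ℤ) =>
            ‖q.1.1 - (q.1.2 + ivN n q.2)‖)
          (((S' ×ˢ S') ×ˢ Kbox).filter fun q => q.1.1 ≠ q.1.2 + ivN n q.2) := by
        rw [← hT]; exact T.min'_mem h
      simp only [Finset.mem_image, Finset.mem_filter] at h2
      obtain ⟨q, ⟨_, hq2⟩, hq3⟩ := h2
      rw [← hq3]
      exact norm_pos_iff.mpr (sub_ne_zero.mpr hq2)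
    · norm_num
  refine ⟨min (1/8) m, by positivity, min_le_left _ _, ?_⟩
  intro s hs s' hs' k hne
  by_cases hk : k ∈ Kbox
  · have hmem : ‖s - (s' + ivN n k)‖ ∈ T := by
      rw [hT]
      apply Finset.mem_image.mpr
      exact ⟨((s, s'), k), Finset.mem_filter.mpr
        ⟨Finset.mem_product.mpr ⟨Finset.mem_product.mpr ⟨hs, hs'⟩, hk⟩, hne⟩, rfl⟩
    have hTne : T.Nonempty := ⟨_, hmem⟩
    calc min (1/8) m ≤ m := min_le_right _ _
    _ ≤ ‖s - (s' + ivN n k)‖ := by rw [hm, dif_pos hTne]; exact T.min'_le _ hmem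
  · rw [hKbox, Finset.mem_Icc] at hk
    push_neg at hk
    have : ∃ i, ¬ ((-1:ℤ) ≤ k i) ∨ ¬ (k i ≤ 1) := by
      by_contra hcon
      push_neg at hcon
      exact hk (fun i => (hcon i).1) (by intro i; exact (hcon i).2)
    obtain ⟨i, hi⟩ := this
    have hki : (2:ℝ) ≤ |(k i : ℝ)| := by
      rcases hi with hi | hi
      · push_neg at hi
        have : k i ≤ -2 := by omega
        have : ((k i : ℤ) : ℝ) ≤ -2 := by exact_mod_cast this
        rw [abs_of_nonpos (by linarith)]; linarith
      · push_neg at hi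
        have : 2 ≤ k i := by omega
        have : (2:ℝ) ≤ ((k i : ℤ) : ℝ) := by exact_mod_cast this
        rw [abs_of_nonneg (by linarith)]; linarith
    have hcoord : (s - (s' + ivN n k)) i = s i - s' i - (k i : ℝ) := by
      simp [PiLp.sub_apply, PiLp.add_apply, ivN]; ring
    have hss' : |s i - s' i| < 1 := by
      obtain ⟨h1, h2⟩ := hS s hs i
      obtain ⟨h3, h4⟩ := hS s' hs' i
      rw [abs_lt]; constructor <;> linarith
    have h1 : (1:ℝ) ≤ |s i - s' i - (k i : ℝ)| := by
      have := abs_sub_abs_le_abs_sub (k i : ℝ) (s i - s' i)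
      have h2 : |(k i:ℝ) - (s i - s' i)| = |s i - s' i - (k i:ℝ)| := abs_sub_comm _ _
      linarith
    calc min (1/8) m ≤ 1/8 := min_le_left _ _
    _ ≤ 1 := by norm_num
    _ ≤ |(s - (s' + ivN n k)) i| := by rw [hcoord]; exact h1
    _ ≤ ‖s - (s' + ivN n k)‖ := apply_abs_le_norm _ i

end S15

set_option maxHeartbeats 1000000 in
set_option synthInstance.maxHeartbeats 400000 in
open S15 in
/-- If `V` is continuous, `ℤⁿ`-periodic, with `max V = 0` attained at
finitely many points per period, then `H̄ ≥ 0` everywhere and `H̄ = 0` on a ball around the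
origin: `0` is an interior point of `F₀`. -/
theorem statement_15 (n : ℕ) (hn : 1 ≤ n)
    (V : EuclideanSpace ℝ (Fin n) → ℝ) (hV : Continuous V) (hper : ZPerN n V)
    (hmax : ∀ x, V x ≤ 0) (hatt : ∃ x, V x = 0)
    (hfin : {x : EuclideanSpace ℝ (Fin n) |
      (∀ i, x i ∈ Set.Ico (0:ℝ) 1) ∧ V x = 0}.Finite) :
    (∀ p : EuclideanSpace ℝ (Fin n), 0 ≤ effHN n V p) ∧
    ∃ r : ℝ, 0 < r ∧ ∀ p : EuclideanSpace ℝ (Fin n), ‖p‖ ≤ r → effHN n V p = 0 := by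
  classical
  obtain ⟨x₀, hx₀⟩ := hatt
  -- lower bound on all elements of the defining set
  have hA0 : ∀ (p : EuclideanSpace ℝ (Fin n)) (A : ℝ),
      (∃ φ : EuclideanSpace ℝ (Fin n) → ℝ, ContDiff ℝ 1 φ ∧ ZPerN n φ ∧
        A = ⨆ x : EuclideanSpace ℝ (Fin n), ((1 / 2) * ‖p + gradient φ x‖ ^ 2 + V x)) →
      0 ≤ A := by
    rintro p A ⟨φ, hφ, hφp, rfl⟩
    by_cases hb : BddAbove (Set.range fun x : EuclideanSpace ℝ (Fin n) =>
        (1 / 2) * ‖p + gradient φ x‖ ^ 2 + V x)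
    · have h0 : 0 ≤ (1 / 2) * ‖p + gradient φ x₀‖ ^ 2 + V x₀ := by
        rw [hx₀]; positivity
      exact h0.trans (le_ciSup hb x₀)
    · rw [Real.iSup_of_not_bddAbove hb]
  have h1 : ∀ p, 0 ≤ effHN n V p := fun p => Real.sInf_nonneg (fun A hA => hA0 p A hA)
  refine ⟨h1, ?_⟩
  -- setup
  have hVsub : ∀ (x : EuclideanSpace ℝ (Fin n)) (k : Fin n → ℤ), V (x - ivN n k) = V x := by
    intro x k
    have h := hper (x - ivN n k) k
    rw [sub_add_cancel] at h
    exact h.symm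
  have hrep : ∀ x : EuclideanSpace ℝ (Fin n), ∃ (s : EuclideanSpace ℝ (Fin n)) (k : Fin n → ℤ),
      x = s + ivN n k ∧ (∀ i, s i ∈ Set.Ico (0:ℝ) 1) ∧ V s = V x := by
    intro x
    refine ⟨x - ivN n (fun i => ⌊x i⌋), fun i => ⌊x i⌋, by abel, ?_, hVsub x _⟩
    intro i
    have h1 : (x - ivN n (fun i => ⌊x i⌋)) i = x i - (⌊x i⌋ : ℝ) := by
      rw [PiLp.sub_apply]; rfl
    rw [h1]
    exact ⟨by linarith [Int.floor_le (x i)], by linarith [Int.lt_floor_add_one (x i)]⟩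
  set S' : Finset (EuclideanSpace ℝ (Fin n)) := hfin.toFinset with hS'def
  have hS'mem : ∀ s, s ∈ S' ↔ ((∀ i, s i ∈ Set.Ico (0:ℝ) 1) ∧ V s = 0) := by
    intro s; rw [hS'def, Set.Finite.mem_toFinset]; rfl
  obtain ⟨ρ₀, hρ₀pos, hρ₀8, hsep⟩ := exists_sep S' (fun s hs => ((hS'mem s).mp hs).1)
  set ρ : ℝ := ρ₀ / 3 with hρdef
  have hρpos : 0 < ρ := by positivity
  have hρ8 : ρ ≤ 1/8 := by rw [hρdef]; linarith
  have hρ1 : ρ ≤ 1 := by linarith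
  set c : ContDiffBump (0 : EuclideanSpace ℝ (Fin n)) :=
    ⟨ρ/2, ρ, by positivity, by linarith⟩ with hcdef
  -- derivative bound for the bump
  have hccd : ContDiff ℝ 1 (⇑c) := c.contDiff
  obtain ⟨Kc, hKc0, hKc⟩ : ∃ K : ℝ, 0 ≤ K ∧ ∀ z, ‖fderiv ℝ (⇑c) z‖ ≤ K := by
    obtain ⟨z₀, hz₀mem, hz₀⟩ :=
      (isCompact_closedBall (0 : EuclideanSpace ℝ (Fin n)) ρ).exists_isMaxOn
      (Metric.nonempty_closedBall.mpr (by positivity))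
      ((hccd.continuous_fderiv one_ne_zero).norm.continuousOn)
    refine ⟨‖fderiv ℝ (⇑c) z₀‖, norm_nonneg _, ?_⟩
    intro z
    by_cases hz : z ∈ Metric.closedBall (0 : EuclideanSpace ℝ (Fin n)) ρ
    · exact hz₀ hz
    · have hzt : z ∉ tsupport (⇑c) := by rwa [c.tsupport_eq]
      have h2 : fderiv ℝ (⇑c) z = 0 := by
        have hns : z ∉ Function.support (fderiv ℝ (⇑c)) :=
          fun hs => hzt (support_fderiv_subset ℝ hs)
        simpa [Function.mem_support, not_not] using hns
      rw [h2]; simp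
  -- the gap δ
  have hδ : ∃ δ : ℝ, 0 < δ ∧ ∀ x : EuclideanSpace ℝ (Fin n),
      (∀ s ∈ S', ρ/2 ≤ ‖Rm n (x - s)‖) → V x ≤ -δ := by
    set L : Set (EuclideanSpace ℝ (Fin n)) := Set.range (ivN n) with hLdef
    set Kset : Set (EuclideanSpace ℝ (Fin n)) :=
      {y | (∀ i, y i ∈ Set.Icc (0:ℝ) 1) ∧ ∀ s ∈ S', ρ/2 ≤ Metric.infDist (y - s) L} with hKsetdef
    have hA : IsClosed {y : EuclideanSpace ℝ (Fin n) | ∀ i, y i ∈ Set.Icc (0:ℝ) 1} := by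
      have he : {y : EuclideanSpace ℝ (Fin n) | ∀ i, y i ∈ Set.Icc (0:ℝ) 1} =
          ⋂ i, (fun y : EuclideanSpace ℝ (Fin n) => y i) ⁻¹' Set.Icc (0:ℝ) 1 := by
        ext y; simp
      rw [he]
      exact isClosed_iInter fun i => isClosed_Icc.preimage (EuclideanSpace.proj i).continuous
    have hB : IsClosed {y : EuclideanSpace ℝ (Fin n) |
        ∀ s ∈ S', ρ/2 ≤ Metric.infDist (y - s) L} := by
      have he : {y : EuclideanSpace ℝ (Fin n) | ∀ s ∈ S', ρ/2 ≤ Metric.infDist (y - s) L} =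
          ⋂ s ∈ S', {y | ρ/2 ≤ Metric.infDist (y - s) L} := by
        ext y; simp
      rw [he]
      refine isClosed_biInter fun s _ => ?_
      exact isClosed_le continuous_const
        ((Metric.continuous_infDist_pt L).comp (continuous_id.sub continuous_const))
    have hKclosed : IsClosed Kset := hA.inter hB
    have hKsub : Kset ⊆ Metric.closedBall 0 ((n:ℝ)+1) := by
      intro y hy
      rw [Metric.mem_closedBall, dist_zero_right, EuclideanSpace.norm_eq]
      have hsum : (∑ i, ‖y i‖^2) ≤ (n:ℝ) := by
        calc (∑ i, ‖y i‖^2) ≤ ∑ _i : Fin n, (1:ℝ) := by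
              apply Finset.sum_le_sum
              intro i _
              obtain ⟨ha, hb⟩ := hy.1 i
              rw [Real.norm_eq_abs]
              nlinarith [abs_nonneg (y i), abs_le.mpr ⟨by linarith, hb⟩]
        _ = (n:ℝ) := by simp
      calc √(∑ i, ‖y i‖^2) ≤ √((n:ℝ)) := Real.sqrt_le_sqrt hsum
      _ ≤ √(((n:ℝ)+1)^2) := Real.sqrt_le_sqrt (by nlinarith [Nat.cast_nonneg (α := ℝ) n])
      _ = (n:ℝ)+1 := Real.sqrt_sq (by positivity)
    have hKcpt : IsCompact Kset :=
      (isCompact_closedBall _ _).of_isClosed_subset hKclosed hKsub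
    have hVneg : ∀ y ∈ Kset, V y < 0 := by
      intro y hy
      rcases lt_or_eq_of_le (hmax y) with h | h
      · exact h
      · exfalso
        obtain ⟨s, k, hyk, hsIco, hVs⟩ := hrep y
        have hsS' : s ∈ S' := (hS'mem s).mpr ⟨hsIco, by rw [hVs, h]⟩
        have hys : y - s = ivN n k := by rw [hyk]; abel
        have h0 : Metric.infDist (y - s) L = 0 := by
          rw [hys]; exact Metric.infDist_zero_of_mem ⟨k, rfl⟩
        have := hy.2 s hsS'
        rw [h0] at this
        linarith
    by_cases hKne : Kset.Nonempty
    · obtain ⟨y₁, hy₁, hy₁max⟩ := hKcpt.exists_isMaxOn hKne hV.continuousOn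
      refine ⟨-V y₁, by linarith [hVneg y₁ hy₁], ?_⟩
      intro x hx
      obtain ⟨s, k, hxk, hsIco, hVs⟩ := hrep x
      have hsK : s ∈ Kset := by
        constructor
        · intro i; exact ⟨(hsIco i).1, le_of_lt (hsIco i).2⟩
        · intro s' hs'
          rw [hLdef, infDist_lat]
          have hss : s - s' = (x - s') - ivN n k := by rw [hxk]; abel
          rw [hss, Rm_shift_sub]
          exact hx s' hs'
      calc V x = V s := hVs.symm
      _ ≤ V y₁ := hy₁max hsK
      _ = -(-V y₁) := by ring
    · refine ⟨1, one_pos, ?_⟩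
      intro x hx
      exfalso
      obtain ⟨s, k, hxk, hsIco, hVs⟩ := hrep x
      apply hKne
      refine ⟨s, ?_, ?_⟩
      · intro i; exact ⟨(hsIco i).1, le_of_lt (hsIco i).2⟩
      · intro s' hs'
        rw [hLdef, infDist_lat]
        have hss : s - s' = (x - s') - ivN n k := by rw [hxk]; abel
        rw [hss, Rm_shift_sub]
        exact hx s' hs'
  obtain ⟨δ, hδpos, hδV⟩ := hδ
  set C : ℝ := 1 + (S'.card : ℝ) * (1 + Kc) with hCdef
  have hCpos : 0 < C := by
    rw [hCdef]
    have : (0:ℝ) ≤ (S'.card : ℝ) * (1 + Kc) :=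
      mul_nonneg (Nat.cast_nonneg _) (by linarith)
    linarith
  refine ⟨Real.sqrt (2*δ) / C,
    div_pos (Real.sqrt_pos.mpr (by linarith)) hCpos, ?_⟩
  intro p hp
  -- the corrector
  set b : EuclideanSpace ℝ (Fin n) → ℝ := fun z => ⟪p, z⟫ * c z with hbdef
  have hb0 : ∀ z : EuclideanSpace ℝ (Fin n), ρ ≤ ‖z‖ → b z = 0 := by
    intro z hz
    have hc0 : c z = 0 := c.zero_of_le_dist (by rwa [dist_zero_right])
    rw [hbdef]; simp [hc0]
  have hb1 : ContDiff ℝ 1 b := (contDiff_const.inner ℝ contDiff_id).mul hccd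
  have hbfd : ∀ z, ‖fderiv ℝ b z‖ ≤ ‖p‖ * (1 + Kc) := by
    intro z
    by_cases hz : ‖z‖ ≤ ρ
    · have hinner : HasFDerivAt (fun w : EuclideanSpace ℝ (Fin n) => ⟪p, w⟫)
          (innerSL ℝ p) z := (innerSL ℝ p).hasFDerivAt
      have hc' : HasFDerivAt (⇑c) (fderiv ℝ (⇑c) z) z :=
        ((hccd.differentiable one_ne_zero) z).hasFDerivAt
      have hmul := hinner.fun_mul hc'
      rw [hmul.fderiv]
      have h1 : ‖⟪p, z⟫ • fderiv ℝ (⇑c) z + c z • innerSL ℝ p‖ ≤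
          ‖⟪p, z⟫ • fderiv ℝ (⇑c) z‖ + ‖c z • innerSL ℝ p‖ := norm_add_le _ _
      have h2 : ‖⟪p, z⟫ • fderiv ℝ (⇑c) z‖ ≤ ‖p‖ * Kc := by
        have h0 : ‖⟪p, z⟫ • fderiv ℝ (⇑c) z‖ ≤ ‖⟪p, z⟫‖ * ‖fderiv ℝ (⇑c) z‖ :=
          ContinuousLinearMap.opNorm_smul_le _ _
        rw [Real.norm_eq_abs] at h0
        have ha : |⟪p, z⟫| ≤ ‖p‖ * ‖z‖ := abs_real_inner_le_norm p z
        have hb' := hKc z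
        calc ‖⟪p, z⟫ • fderiv ℝ (⇑c) z‖ ≤ |⟪p, z⟫| * ‖fderiv ℝ (⇑c) z‖ := h0
        _ ≤ (‖p‖ * ‖z‖) * Kc := mul_le_mul ha hb' (norm_nonneg _) (by positivity)
        _ ≤ ‖p‖ * Kc := by nlinarith [mul_nonneg (norm_nonneg p) hKc0, hz.trans hρ1]
      have h3 : ‖c z • innerSL ℝ p‖ ≤ ‖p‖ := by
        have h0 : ‖c z • (innerSL ℝ p : EuclideanSpace ℝ (Fin n) →L[ℝ] ℝ)‖
            ≤ ‖c z‖ * ‖(innerSL ℝ p : EuclideanSpace ℝ (Fin n) →L[ℝ] ℝ)‖ :=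
          ContinuousLinearMap.opNorm_smul_le _ _
        rw [Real.norm_eq_abs, innerSL_apply_norm] at h0
        have h4 := c.nonneg (x := z)
        have h5 := c.le_one (x := z)
        have h6 : |c z| ≤ 1 := abs_le.mpr ⟨by linarith, h5⟩
        nlinarith [norm_nonneg p]
      calc ‖⟪p, z⟫ • fderiv ℝ (⇑c) z + c z • innerSL ℝ p‖ ≤
          ‖p‖ * Kc + ‖p‖ := by linarith
      _ = ‖p‖ * (1 + Kc) := by ring
    · have hsupp : Function.support b ⊆ Metric.ball (0 : EuclideanSpace ℝ (Fin n)) ρ := by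
        intro w hw
        by_contra hball
        exact hw (hb0 w (by rwa [Metric.mem_ball, dist_zero_right, not_lt] at hball))
      have hts : tsupport b ⊆ Metric.closedBall 0 ρ :=
        closure_minimal (hsupp.trans Metric.ball_subset_closedBall) Metric.isClosed_closedBall
      have hzz : z ∉ tsupport b := fun hmem => hz
        (by simpa [Metric.mem_closedBall, dist_zero_right] using hts hmem)
      have h0 : fderiv ℝ b z = 0 := by
        have hns : z ∉ Function.support (fderiv ℝ b) :=
          fun hs => hzz (support_fderiv_subset ℝ hs)
        simpa [Function.mem_support, not_not] using hns
      rw [h0]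
      simp
      positivity
  set φ : EuclideanSpace ℝ (Fin n) → ℝ := fun y => -(∑ s ∈ S', b (Rm n (y - s))) with hφdef
  have hφper : ZPerN n φ := by
    intro y k
    rw [hφdef]
    simp only [neg_inj]
    apply Finset.sum_congr rfl
    intro s _
    rw [show y + ivN n k - s = (y - s) + ivN n k by abel, Rm_shift]
  have hφC1 : ContDiff ℝ 1 φ := by
    rw [contDiff_iff_contDiffAt]
    intro x
    apply ContDiffAt.neg
    apply ContDiffAt.sum
    intro s _
    obtain ⟨g, hg, hgcase⟩ := local_form b hρ8 hb0 s x
    refine ContDiffAt.congr_of_eventuallyEq ?_ hg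
    rcases hgcase with rfl | ⟨k, rfl⟩
    · exact contDiffAt_const
    · have he : (fun y : EuclideanSpace ℝ (Fin n) => b (y - s - ivN n k)) =
          fun y => b (y - (s + ivN n k)) := by funext y; rw [sub_sub]
      rw [he]
      exact (hb1.comp (contDiff_id.sub contDiff_const)).contDiffAt
  -- generic derivative bound
  have hD : ∀ (x s : EuclideanSpace ℝ (Fin n)), ∃ D : EuclideanSpace ℝ (Fin n) →L[ℝ] ℝ,
      HasFDerivAt (fun y => b (Rm n (y - s))) D x ∧ ‖D‖ ≤ ‖p‖ * (1 + Kc) := by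
    intro x s
    obtain ⟨g, hg, hgcase⟩ := local_form b hρ8 hb0 s x
    rcases hgcase with rfl | ⟨k, rfl⟩
    · refine ⟨0, (hasFDerivAt_const 0 x).congr_of_eventuallyEq hg, by simp; positivity⟩
    · refine ⟨fderiv ℝ b (x - s - ivN n k), ?_, hbfd _⟩
      have hbd : HasFDerivAt b (fderiv ℝ b (x - s - ivN n k)) (x - s - ivN n k) :=
        ((hb1.differentiable one_ne_zero) _).hasFDerivAt
      have htr : HasFDerivAt (fun y : EuclideanSpace ℝ (Fin n) => y - s - ivN n k)
          (ContinuousLinearMap.id ℝ (EuclideanSpace ℝ (Fin n))) x := by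
        simpa using ((hasFDerivAt_id x).sub_const s).sub_const (ivN n k)
      have hcomp := hbd.comp x htr
      rw [ContinuousLinearMap.comp_id] at hcomp
      exact hcomp.congr_of_eventuallyEq hg
  -- gradient bound
  have hgradle : ∀ x : EuclideanSpace ℝ (Fin n),
      ‖gradient φ x‖ ≤ ‖p‖ * ((S'.card : ℝ) * (1 + Kc)) := by
    intro x
    choose D hDfd hDle using hD x
    have hsum : HasFDerivAt φ (-(∑ s ∈ S', D s)) x :=
      (HasFDerivAt.fun_sum (fun s _ => hDfd s)).neg
    rw [hsum.hasGradientAt.gradient, LinearIsometryEquiv.norm_map]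
    calc ‖-(∑ s ∈ S', D s)‖ = ‖∑ s ∈ S', D s‖ := norm_neg _
    _ ≤ ∑ s ∈ S', ‖D s‖ := norm_sum_le _ _
    _ ≤ ∑ _s ∈ S', ‖p‖ * (1 + Kc) := Finset.sum_le_sum fun s _ => hDle s
    _ = (S'.card : ℝ) * (‖p‖ * (1 + Kc)) := by
        rw [Finset.sum_const, nsmul_eq_mul]
    _ = ‖p‖ * ((S'.card : ℝ) * (1 + Kc)) := by ring
  -- exact gradient near the maximum points
  have hcase1 : ∀ x : EuclideanSpace ℝ (Fin n),
      (∃ s ∈ S', ‖Rm n (x - s)‖ < ρ/2) → gradient φ x = -p := by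
    rintro x ⟨s₁, hs₁S, hs₁⟩
    set k₁ : Fin n → ℤ := fun i => round ((x - s₁) i) with hk₁def
    have hxk : ‖x - s₁ - ivN n k₁‖ < ρ/2 := by
      have := Rm_eq (x - s₁)
      rw [hk₁def, ← this]
      exact hs₁
    have hevk : ∀ᶠ y in 𝓝 x, ∀ i, round ((y - s₁) i) = k₁ i := by
      rw [eventually_all]
      intro i
      have hcont : Continuous fun y : EuclideanSpace ℝ (Fin n) => (y - s₁) i := by
        have : Continuous fun y : EuclideanSpace ℝ (Fin n) => y - s₁ :=
          continuous_id.sub continuous_const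
        exact (EuclideanSpace.proj i).continuous.comp this
      have hhalf : ∀ m : ℤ, (x - s₁) i + 1/2 ≠ (m : ℝ) := by
        intro m hm
        have h38 := half_int_far hm ((x - s₁) i) (by simp) (round ((x - s₁) i))
        have : |(x - s₁) i - round ((x - s₁) i)| ≤ ‖Rm n (x - s₁)‖ := by
          rw [← Rm_apply]; exact apply_abs_le_norm _ i
        have hρ16 : ‖Rm n (x - s₁)‖ < 1/16 := lt_of_lt_of_le hs₁ (by linarith)
        linarith
      exact hcont.continuousAt.eventually (round_eventually_const hhalf)
    have hevb : ∀ᶠ y in 𝓝 x, ‖y - s₁ - ivN n k₁‖ < ρ/2 := by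
      have hcont : Continuous fun y : EuclideanSpace ℝ (Fin n) => ‖y - s₁ - ivN n k₁‖ :=
        ((continuous_id.sub continuous_const).sub continuous_const).norm
      exact Filter.eventually_iff.mpr ((isOpen_lt hcont continuous_const).mem_nhds hxk)
    have hB1 : (fun y => b (Rm n (y - s₁))) =ᶠ[𝓝 x]
        fun y => ⟪p, y - s₁ - ivN n k₁⟫ := by
      filter_upwards [hevk, hevb] with y h1 h2
      rw [Rm_eq]
      have hfe : (fun i => round ((y - s₁) i)) = k₁ := funext h1
      rw [hfe, hbdef]
      have hc1 : c (y - s₁ - ivN n k₁) = 1 :=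
        c.one_of_mem_closedBall (by rw [Metric.mem_closedBall, dist_zero_right]; exact h2.le)
      simp [hc1]
    have hfdB1 : HasFDerivAt (fun y => b (Rm n (y - s₁))) (innerSL ℝ p : _ →L[ℝ] ℝ) x := by
      have htr : HasFDerivAt (fun y : EuclideanSpace ℝ (Fin n) => y - s₁ - ivN n k₁)
          (ContinuousLinearMap.id ℝ (EuclideanSpace ℝ (Fin n))) x := by
        simpa using ((hasFDerivAt_id x).sub_const s₁).sub_const (ivN n k₁)
      have hlin := (innerSL ℝ p).hasFDerivAt.comp x htr
      rw [ContinuousLinearMap.comp_id] at hlin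
      exact hlin.congr_of_eventuallyEq hB1
    have hfdB0 : ∀ s ∈ S', s ≠ s₁ →
        HasFDerivAt (fun y => b (Rm n (y - s))) (0 : EuclideanSpace ℝ (Fin n) →L[ℝ] ℝ) x := by
      intro s hsS hne
      have hev0 : (fun y => b (Rm n (y - s))) =ᶠ[𝓝 x] fun _ => 0 := by
        have hball : Metric.ball x (ρ/2) ∈ 𝓝 x := Metric.ball_mem_nhds _ (by positivity)
        filter_upwards [hball] with y hy
        apply hb0
        set k' : Fin n → ℤ := fun i => round ((y - s) i) with hk'def
        have hRw : Rm n (y - s) = y - (s + ivN n k') := by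
          rw [Rm_eq, hk'def, sub_sub]
        have hne' : s₁ ≠ s + ivN n (k' - k₁) := by
          intro heq
          apply hne
          have hzero : ∀ i, ((k' - k₁) i : ℝ) = 0 := by
            intro i
            have h1 : s₁ i = s i + ((k' - k₁) i : ℝ) := by
              rw [heq, PiLp.add_apply]; rfl
            obtain ⟨ha1, ha2⟩ := ((hS'mem s₁).mp hs₁S).1 i
            obtain ⟨hb1', hb2'⟩ := ((hS'mem s).mp hsS).1 i
            have h2 : -1 < ((k' - k₁) i : ℝ) ∧ ((k' - k₁) i : ℝ) < 1 := by
              constructor <;> nlinarith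
            have h3 : (k' - k₁) i = 0 := by
              have := h2.1; have := h2.2
              have hlt : |((k' - k₁) i : ℝ)| < 1 := abs_lt.mpr h2
              by_contra hne0
              have := Int.one_le_abs hne0
              have : (1:ℝ) ≤ |((k' - k₁) i : ℝ)| := by exact_mod_cast this
              linarith
            simp [h3]
          have hiv : ivN n (k' - k₁) = 0 := by
            ext i; exact hzero i
          rw [hiv, add_zero] at heq
          exact heq.symm
        have hsep' : ρ₀ ≤ ‖s₁ - (s + ivN n (k' - k₁))‖ := hsep s₁ hs₁S s hsS _ hne'
        have hd1 : ‖s₁ - (s + ivN n (k' - k₁))‖ = ‖(s₁ + ivN n k₁) - (s + ivN n k')‖ := by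
          rw [ivN_sub]; congr 1; abel
        have htri : ‖(s₁ + ivN n k₁) - (s + ivN n k')‖ ≤
            ‖(s₁ + ivN n k₁) - y‖ + ‖y - (s + ivN n k')‖ := by
          have := dist_triangle (s₁ + ivN n k₁) y (s + ivN n k')
          simpa [dist_eq_norm] using this
        have e1 : ‖(s₁ + ivN n k₁) - x‖ < ρ/2 := by
          rw [norm_sub_rev, ← sub_sub]
          exact hxk
        have e2 : ‖x - y‖ < ρ/2 := by
          rw [norm_sub_rev, ← dist_eq_norm]
          exact hy
        have htri2 : ‖(s₁ + ivN n k₁) - y‖ ≤ ‖(s₁ + ivN n k₁) - x‖ + ‖x - y‖ := by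
          have := dist_triangle (s₁ + ivN n k₁) x y
          simpa [dist_eq_norm] using this
        have hρ₀3 : ρ₀ = 3 * ρ := by rw [hρdef]; ring
        rw [hRw]
        rw [hd1] at hsep'
        linarith
      exact (hasFDerivAt_const 0 x).congr_of_eventuallyEq hev0
    have hsum : HasFDerivAt φ (-(∑ s ∈ S', if s = s₁ then
        (innerSL ℝ p : EuclideanSpace ℝ (Fin n) →L[ℝ] ℝ) else 0)) x := by
      refine (HasFDerivAt.fun_sum fun s hs => ?_).neg
      by_cases h : s = s₁
      · subst h; rw [if_pos rfl]; exact hfdB1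
      · rw [if_neg h]; exact hfdB0 s hs h
    have hsimp : (∑ s ∈ S', if s = s₁ then
        (innerSL ℝ p : EuclideanSpace ℝ (Fin n) →L[ℝ] ℝ) else 0) = innerSL ℝ p := by
      rw [Finset.sum_ite_eq' S' s₁ (fun _ => (innerSL ℝ p : EuclideanSpace ℝ (Fin n) →L[ℝ] ℝ)),
        if_pos hs₁S]
    rw [hsimp] at hsum
    rw [hsum.hasGradientAt.gradient]
    have htd : (InnerProductSpace.toDual ℝ (EuclideanSpace ℝ (Fin n))) p = innerSL ℝ p := by
      ext y
      simp [InnerProductSpace.toDual_apply_apply]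
    rw [map_neg, ← htd, LinearIsometryEquiv.symm_apply_apply]
  -- the pointwise estimate
  have hval : ∀ x : EuclideanSpace ℝ (Fin n),
      (1 / 2) * ‖p + gradient φ x‖ ^ 2 + V x ≤ 0 := by
    intro x
    by_cases hc : ∃ s ∈ S', ‖Rm n (x - s)‖ < ρ/2
    · rw [hcase1 x hc]
      simpa using hmax x
    · push_neg at hc
      have hVx := hδV x hc
      have hnorm : ‖p + gradient φ x‖ ≤ ‖p‖ * C := by
        have := hgradle x
        calc ‖p + gradient φ x‖ ≤ ‖p‖ + ‖gradient φ x‖ := norm_add_le _ _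
        _ ≤ ‖p‖ + ‖p‖ * ((S'.card : ℝ) * (1 + Kc)) := by linarith
        _ = ‖p‖ * C := by rw [hCdef]; ring
      have hpr : ‖p‖ * C ≤ Real.sqrt (2*δ) := by
        have hh := mul_le_mul_of_nonneg_right hp (le_of_lt hCpos)
        calc ‖p‖ * C ≤ (Real.sqrt (2*δ) / C) * C := hh
        _ = Real.sqrt (2*δ) := div_mul_cancel₀ _ (ne_of_gt hCpos)
      have hsq : ‖p + gradient φ x‖^2 ≤ 2*δ := by
        have h2 : ‖p + gradient φ x‖^2 ≤ (Real.sqrt (2*δ))^2 :=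
          pow_le_pow_left₀ (norm_nonneg _) (hnorm.trans hpr) 2
        rwa [Real.sq_sqrt (by positivity)] at h2
      linarith
  -- conclusion
  have hcx₀ : ∃ s ∈ S', ‖Rm n (x₀ - s)‖ < ρ/2 := by
    obtain ⟨s, k, hxk, hsIco, hVs⟩ := hrep x₀
    refine ⟨s, (hS'mem s).mpr ⟨hsIco, by rw [hVs, hx₀]⟩, ?_⟩
    have hxs : x₀ - s = ivN n k := by rw [hxk]; abel
    rw [hxs, Rm_ivN]
    simpa using by positivity
  have hfx₀ : (1 / 2) * ‖p + gradient φ x₀‖ ^ 2 + V x₀ = 0 := by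
    rw [hcase1 x₀ hcx₀, hx₀]
    simp
  have hbddA : BddAbove (Set.range fun x : EuclideanSpace ℝ (Fin n) =>
      (1 / 2) * ‖p + gradient φ x‖ ^ 2 + V x) :=
    ⟨0, by rintro _ ⟨x, rfl⟩; exact hval x⟩
  have hsup : (⨆ x : EuclideanSpace ℝ (Fin n),
      ((1 / 2) * ‖p + gradient φ x‖ ^ 2 + V x)) = 0 :=
    le_antisymm (ciSup_le hval) (hfx₀ ▸ le_ciSup hbddA x₀)
  have hmem : (0:ℝ) ∈ {A : ℝ | ∃ φ' : EuclideanSpace ℝ (Fin n) → ℝ,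
      ContDiff ℝ 1 φ' ∧ ZPerN n φ' ∧
      A = ⨆ x : EuclideanSpace ℝ (Fin n), ((1 / 2) * ‖p + gradient φ' x‖ ^ 2 + V x)} :=
    ⟨φ, hφC1, hφper, hsup.symm⟩
  have hle : effHN n V p ≤ 0 := csInf_le ⟨0, fun A hA => hA0 p A hA⟩ hmem
  exact le_antisymm hle (h1 p)
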